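/- arXiv:1310.0784 — 2 statements merged into one kernel-verified Lean document; each statement's English description precedes it below -/
import Mathlib

section
/- The bracket on vector densities of weights μ, ν ≠ 1, defined by [𝔛,𝔜] := [L_𝔛, L_𝔜] restricted back to functions (where L_𝔛 is the divergence-free lift), is given explicitly by [𝔛,𝔜]^b = (𝔛^a ∂_a − (ν/(μ−1))∂_a𝔛^a)𝔜^b − (𝔜^a ∂_a − (μ/(ν−1))∂_a𝔜^a)𝔛^b, and has weight μ+ν. -/
noncomputable section

/- Model: densities are `AddMonoidAlgebra R ℝ` over a commutative ℝ-algebra `R`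
(modeling `C^∞(ℝ^n)`), with commuting derivations `D a = ∂/∂x^a`;
`AddMonoidAlgebra.single λ f` models `f(x) t^λ`.  A vector density of weight μ
is `𝔛 = t^μ 𝔛^a ∂_a`, with divergence-free lift
`L_𝔛 = t^μ(𝔛^a ∂_a − (μ−1)⁻¹ ∂_a𝔛^a · t∂_t)`.
Claim (μ,ν ≠ 1): the commutator `[L_𝔛, L_𝔜]` restricted to functions (weight-0
densities `single 0 f`) is the vector density of weight μ+ν with components
`(𝔛^a∂_a − (ν/(μ−1))∂_a𝔛^a)𝔜^b − (𝔜^a∂_a − (μ/(ν−1))∂_a𝔜^a)𝔛^b`. -/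

variable {R : Type*} [CommRing R] [Algebra ℝ R]

def wop (ψ : AddMonoidAlgebra R ℝ) : AddMonoidAlgebra R ℝ :=
  AddMonoidAlgebra.ofCoeff (Finsupp.sum ψ.coeff fun l c => Finsupp.single l (l • c))

def paD {n : ℕ} (D : Fin n → Derivation ℝ R R) (a : Fin n)
    (ψ : AddMonoidAlgebra R ℝ) : AddMonoidAlgebra R ℝ :=
  AddMonoidAlgebra.ofCoeff (Finsupp.mapRange (D a) (map_zero _) ψ.coeff)

/-- The divergence-free lift (generalized Lie derivative) of the weight-μ
vector density `t^μ Xa^a ∂_a`. -/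
def Llift {n : ℕ} (D : Fin n → Derivation ℝ R R) (μ : ℝ) (Xa : Fin n → R)
    (ψ : AddMonoidAlgebra R ℝ) : AddMonoidAlgebra R ℝ :=
  (∑ a, AddMonoidAlgebra.single μ (Xa a) * paD D a ψ)
    - (μ - 1)⁻¹ • (AddMonoidAlgebra.single μ (∑ a, D a (Xa a)) * wop ψ)

lemma wop_single (l : ℝ) (c : R) : wop (AddMonoidAlgebra.single l c) = AddMonoidAlgebra.single l (l • c) := by
  classical
  rw [wop, AddMonoidAlgebra.coeff_single, Finsupp.sum_single_index, AddMonoidAlgebra.ofCoeff_single]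
  simp

lemma paD_single {n : ℕ} (D : Fin n → Derivation ℝ R R) (a : Fin n) (l : ℝ) (c : R) :
    paD D a (AddMonoidAlgebra.single l c) = AddMonoidAlgebra.single l (D a c) := by
  simp [paD, AddMonoidAlgebra.coeff_single, AddMonoidAlgebra.ofCoeff_single]

lemma Llift_single {n : ℕ} (D : Fin n → Derivation ℝ R R) (μ : ℝ) (Xa : Fin n → R)
    (l : ℝ) (c : R) :
    Llift D μ Xa (AddMonoidAlgebra.single l c)
      = AddMonoidAlgebra.single (μ + l)
          ((∑ a, Xa a * D a c) - ((μ - 1)⁻¹ * l) • ((∑ a, D a (Xa a)) * c)) := by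
  simp only [Llift, wop_single, paD_single, AddMonoidAlgebra.single_mul_single,
    AddMonoidAlgebra.smul_single, AddMonoidAlgebra.single_sub]
  congr 1
  · exact (map_sum (AddMonoidAlgebra.singleAddHom (μ + l)) _ _).symm
  · rw [mul_smul, mul_smul_comm]

theorem bracket_of_vector_densities
    {n : ℕ} (D : Fin n → Derivation ℝ R R)
    (hD : ∀ a b (f : R), D a (D b f) = D b (D a f))
    (μ ν : ℝ) (hμ : μ ≠ 1) (hν : ν ≠ 1) (Xa Ya : Fin n → R) :
    ∀ f : R,
      Llift D μ Xa (Llift D ν Ya (AddMonoidAlgebra.single 0 f))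
        - Llift D ν Ya (Llift D μ Xa (AddMonoidAlgebra.single 0 f))
      = AddMonoidAlgebra.single (μ + ν) (∑ b,
          (((∑ a, Xa a * D a (Ya b)) - (ν * (μ - 1)⁻¹) • ((∑ a, D a (Xa a)) * Ya b))
            - ((∑ a, Ya a * D a (Xa b)) - (μ * (ν - 1)⁻¹) • ((∑ a, D a (Ya a)) * Xa b)))
          * D b f) := by
  intro f
  have h1 : Llift D ν Ya (AddMonoidAlgebra.single 0 f)
      = AddMonoidAlgebra.single ν (∑ a, Ya a * D a f) := by
    rw [Llift_single]
    simp
  have h2 : Llift D μ Xa (AddMonoidAlgebra.single 0 f)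
      = AddMonoidAlgebra.single μ (∑ a, Xa a * D a f) := by
    rw [Llift_single]
    simp
  rw [h1, h2, Llift_single, Llift_single, add_comm ν μ, ← AddMonoidAlgebra.single_sub]
  show AddMonoidAlgebra.single _ _ = AddMonoidAlgebra.single _ _
  congr 1
  have key : ∀ X Y : Fin n → R,
      (∑ a, X a * D a (∑ b, Y b * D b f))
        = (∑ b, (∑ a, X a * D a (Y b)) * D b f)
          + ∑ a, ∑ b, X a * (Y b * D a (D b f)) := by
    intro X Y
    simp only [map_sum, Derivation.leibniz, smul_eq_mul, Finset.mul_sum,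
      Finset.sum_add_distrib]
    simp only [mul_add, Finset.mul_sum, Finset.sum_add_distrib]
    rw [add_comm]
    congr 1
    rw [Finset.sum_comm]
    refine Finset.sum_congr rfl fun b _ => ?_
    rw [Finset.sum_mul]
    refine Finset.sum_congr rfl fun a _ => ?_
    ring
  have swap : (∑ a, ∑ b, Xa a * (Ya b * D a (D b f)))
      = ∑ a, ∑ b, Ya a * (Xa b * D a (D b f)) := by
    rw [Finset.sum_comm]
    refine Finset.sum_congr rfl fun a _ => Finset.sum_congr rfl fun b _ => ?_
    rw [hD]
    ring
  have expand : ∀ (c : ℝ) (S : R) (Z : Fin n → R),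
      c • (S * ∑ b, Z b * D b f) = ∑ b, (c • (S * Z b)) * D b f := by
    intro c S Z
    rw [Finset.mul_sum, Finset.smul_sum]
    refine Finset.sum_congr rfl fun b _ => ?_
    rw [smul_mul_assoc, mul_assoc]
  rw [key Xa Ya, key Ya Xa, swap, expand, expand,
    mul_comm ((μ - 1):ℝ)⁻¹ ν, mul_comm ((ν - 1):ℝ)⁻¹ μ]
  simp only [sub_mul, Finset.sum_sub_distrib]
  abel


end
end

section
/- The canonical odd Laplacian on multivector fields on the Thomas bundle squares to zero: δ² = 0, where δ = ∂_{x^a}∂_{x*_a} + t²∂_t t^{-2} ∂_{t*}. -/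
noncomputable section

/- Same model as for the previous statement: multivector fields on the Thomas
bundle are pairs `P = (P₀, P₁)` (representing `P₀ + t t* P₁`) of elements of
`V = ℝ →₀ (Finset (Fin n) → R)`, over a commutative ℝ-algebra `R` (modeling
`C^∞(ℝ^n)`) with commuting derivations `D a = ∂/∂x^a`.  The canonical odd
Laplacian is `δ = Σ_a ∂_{x^a}∂_{x*_a} + t²∂_t ∘ M_{t⁻²} ∘ ∂_{t*}`.
Claim: `δ ∘ δ = 0`. -/

variable {R : Type*} [CommRing R] [Algebra ℝ R] {n : ℕ}

def dxs (a : Fin n) (P : Finset (Fin n) → R) : Finset (Fin n) → R :=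
  fun S => if a ∈ S then 0
    else ((-1 : ℤ) ^ (S.filter (· < a)).card) • P (insert a S)

def delta0 (D : Fin n → Derivation ℝ R R) (P : Finset (Fin n) → R) :
    Finset (Fin n) → R :=
  fun S => ∑ a, D a (dxs a P S)

def shiftV (k : ℝ) (v : ℝ →₀ (Finset (Fin n) → R)) :
    ℝ →₀ (Finset (Fin n) → R) :=
  Finsupp.mapDomain (· + k) v

def dtV (v : ℝ →₀ (Finset (Fin n) → R)) : ℝ →₀ (Finset (Fin n) → R) :=
  v.sum fun l c => Finsupp.single (l - 1) (l • c)

def delta0V (D : Fin n → Derivation ℝ R R) (v : ℝ →₀ (Finset (Fin n) → R)) :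
    ℝ →₀ (Finset (Fin n) → R) :=
  v.sum fun l c => Finsupp.single l (delta0 D c)

def deltaBV (D : Fin n → Derivation ℝ R R)
    (P : (ℝ →₀ (Finset (Fin n) → R)) × (ℝ →₀ (Finset (Fin n) → R))) :
    (ℝ →₀ (Finset (Fin n) → R)) × (ℝ →₀ (Finset (Fin n) → R)) :=
  (delta0V D P.1 + shiftV 2 (dtV (shiftV (-2) (shiftV 1 P.2))),
   - delta0V D P.2)

set_option linter.unusedSectionVars false

/-! ### Combinatorial core: `delta0 ∘ delta0 = 0` -/

lemma filter_insert_card (a b : Fin n) (S : Finset (Fin n)) (ha : a ∉ S) :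
    ((insert a S).filter (· < b)).card
      = (S.filter (· < b)).card + (if a < b then 1 else 0) := by
  rw [Finset.filter_insert]
  split
  · rw [Finset.card_insert_of_notMem (fun h => ha (Finset.mem_of_mem_filter a h))]
  · simp

lemma dxs_dxs_self (a : Fin n) (P : Finset (Fin n) → R) (S : Finset (Fin n)) :
    dxs a (dxs a P) S = 0 := by
  simp [dxs]

lemma dxs_dxs_antisymm (a b : Fin n) (hab : a ≠ b) (P : Finset (Fin n) → R)
    (S : Finset (Fin n)) :
    dxs a (dxs b P) S = - dxs b (dxs a P) S := by
  by_cases ha : a ∈ S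
  · have hb : a ∈ insert b S := Finset.mem_insert_of_mem ha
    simp [dxs, ha, hb]
  by_cases hb : b ∈ S
  · have ha' : b ∈ insert a S := Finset.mem_insert_of_mem hb
    simp [dxs, ha, hb, ha']
  have hba : b ∉ insert a S := by simp [hab.symm, hb]
  have hab' : a ∉ insert b S := by simp [hab, ha]
  simp only [dxs, if_neg ha, if_neg hb, if_neg hba, if_neg hab',
    filter_insert_card a b S ha, filter_insert_card b a S hb,
    Finset.insert_comm a b S, smul_smul, ← pow_add]
  rcases lt_or_gt_of_ne hab with h | h
  · have h2 : ¬ b < a := not_lt_of_gt h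
    rw [if_pos h, if_neg h2,
      show (S.filter (· < a)).card + ((S.filter (· < b)).card + 1)
        = ((S.filter (· < b)).card + ((S.filter (· < a)).card + 0)) + 1 by omega,
      pow_succ, mul_neg_one, neg_smul]
  · have h2 : ¬ a < b := not_lt_of_gt h
    rw [if_pos h, if_neg h2,
      show (S.filter (· < b)).card + ((S.filter (· < a)).card + 1)
        = ((S.filter (· < a)).card + ((S.filter (· < b)).card + 0)) + 1 by omega,
      pow_succ, mul_neg_one, neg_smul, neg_neg]

lemma dxs_delta0 (D : Fin n → Derivation ℝ R R) (a : Fin n)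
    (P : Finset (Fin n) → R) (S : Finset (Fin n)) :
    dxs a (delta0 D P) S = ∑ b, D b (dxs a (dxs b P) S) := by
  by_cases ha : a ∈ S
  · simp [dxs, ha]
  · simp only [dxs, delta0, if_neg ha, Finset.smul_sum]
    exact Finset.sum_congr rfl fun b _ => (map_zsmul (D b) _ _).symm

lemma delta0_delta0 (D : Fin n → Derivation ℝ R R)
    (hD : ∀ a b (f : R), D a (D b f) = D b (D a f))
    (P : Finset (Fin n) → R) :
    delta0 D (delta0 D P) = 0 := by
  funext S
  show (∑ a, D a (dxs a (delta0 D P) S)) = 0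
  have key : ∀ a : Fin n, D a (dxs a (delta0 D P) S)
      = ∑ b, D a (D b (dxs a (dxs b P) S)) := by
    intro a
    rw [dxs_delta0, map_sum]
  simp only [key]
  rw [← Finset.sum_product']
  refine Finset.sum_ninvolution Prod.swap ?_ ?_ (fun _ => Finset.mem_univ _)
    (fun p => Prod.swap_swap p)
  · rintro ⟨a, b⟩
    by_cases hab : a = b
    · subst hab
      simp [dxs_dxs_self]
    · show D a (D b (dxs a (dxs b P) S)) + D b (D a (dxs b (dxs a P) S)) = 0
      rw [dxs_dxs_antisymm b a (Ne.symm hab), map_neg, map_neg, hD b a]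
      exact add_neg_cancel _
  · rintro ⟨a, b⟩ h hswap
    apply h
    have hab : b = a := by
      have := congrArg Prod.fst hswap
      simpa using this
    subst hab
    simp [dxs_dxs_self]

/-! ### Algebraic properties of `delta0` -/

lemma delta0_zero (D : Fin n → Derivation ℝ R R) :
    delta0 D (0 : Finset (Fin n) → R) = 0 := by
  funext S; simp [delta0, dxs]

lemma dxs_add (a : Fin n) (P Q : Finset (Fin n) → R) (S : Finset (Fin n)) :
    dxs a (P + Q) S = dxs a P S + dxs a Q S := by
  unfold dxs; split <;> simp [smul_add]

lemma delta0_add (D : Fin n → Derivation ℝ R R) (P Q : Finset (Fin n) → R) :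
    delta0 D (P + Q) = delta0 D P + delta0 D Q := by
  funext S
  simp only [delta0, Pi.add_apply, dxs_add, map_add, Finset.sum_add_distrib]

lemma dxs_smul (a : Fin n) (k : ℝ) (P : Finset (Fin n) → R) (S : Finset (Fin n)) :
    dxs a (k • P) S = k • dxs a P S := by
  unfold dxs; split
  · simp
  · simp [smul_comm]

lemma delta0_smul (D : Fin n → Derivation ℝ R R) (k : ℝ) (P : Finset (Fin n) → R) :
    delta0 D (k • P) = k • delta0 D P := by
  funext S
  simp only [delta0, dxs_smul, Pi.smul_apply, Finset.smul_sum]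
  exact Finset.sum_congr rfl fun a _ => (D a).map_smul k _

lemma delta0_neg (D : Fin n → Derivation ℝ R R) (P : Finset (Fin n) → R) :
    delta0 D (-P) = - delta0 D P := by
  have h := delta0_add D P (-P)
  simp only [add_neg_cancel, delta0_zero] at h
  exact eq_neg_of_add_eq_zero_right h.symm

/-! ### Lifting to `V = ℝ →₀ (Finset (Fin n) → R)` -/

lemma delta0V_eq (D : Fin n → Derivation ℝ R R) (v : ℝ →₀ (Finset (Fin n) → R)) :
    delta0V D v = Finsupp.mapRange (delta0 D) (delta0_zero D) v := by
  induction v using Finsupp.induction_linear with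
  | zero => simp [delta0V]
  | add v w ihv ihw =>
    rw [delta0V, Finsupp.sum_add_index' (fun l => by simp [delta0_zero])
      (fun l b₁ b₂ => by rw [delta0_add, Finsupp.single_add]),
      Finsupp.mapRange_add (delta0_add D), ← ihv, ← ihw]; rfl
  | single l c =>
    rw [delta0V, Finsupp.sum_single_index (by simp [delta0_zero]),
      Finsupp.mapRange_single]

lemma delta0V_add (D : Fin n → Derivation ℝ R R) (v w : ℝ →₀ (Finset (Fin n) → R)) :
    delta0V D (v + w) = delta0V D v + delta0V D w := by
  simp only [delta0V_eq]
  exact Finsupp.mapRange_add (delta0_add D) v w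

lemma delta0V_shiftV (D : Fin n → Derivation ℝ R R) (k : ℝ)
    (v : ℝ →₀ (Finset (Fin n) → R)) :
    delta0V D (shiftV k v) = shiftV k (delta0V D v) := by
  simp only [delta0V_eq, shiftV]
  exact (Finsupp.mapDomain_mapRange _ _ _ _ (fun x y => by rw [delta0_add])).symm

lemma dtV_single (l : ℝ) (c : Finset (Fin n) → R) :
    dtV (Finsupp.single l c) = Finsupp.single (l - 1) (l • c) := by
  rw [dtV, Finsupp.sum_single_index (by simp)]

lemma dtV_add (v w : ℝ →₀ (Finset (Fin n) → R)) :
    dtV (v + w) = dtV v + dtV w := by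
  rw [dtV, Finsupp.sum_add_index' (fun l => by simp)
    (fun l b₁ b₂ => by rw [smul_add, Finsupp.single_add])]
  rfl

lemma delta0V_dtV (D : Fin n → Derivation ℝ R R) (v : ℝ →₀ (Finset (Fin n) → R)) :
    delta0V D (dtV v) = dtV (delta0V D v) := by
  induction v using Finsupp.induction_linear with
  | zero => simp [dtV, delta0V]
  | add v w ihv ihw => rw [dtV_add, delta0V_add, ihv, ihw, delta0V_add, dtV_add]
  | single l c =>
    rw [dtV_single, delta0V_eq, delta0V_eq, Finsupp.mapRange_single,
      Finsupp.mapRange_single, dtV_single, delta0_smul]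

lemma delta0V_neg (D : Fin n → Derivation ℝ R R) (v : ℝ →₀ (Finset (Fin n) → R)) :
    delta0V D (-v) = - delta0V D v := by
  simp only [delta0V_eq]
  exact Finsupp.mapRange_neg (delta0_neg D) v

lemma shiftV_neg (k : ℝ) (v : ℝ →₀ (Finset (Fin n) → R)) :
    shiftV k (-v) = - shiftV k v := by
  have h := congrArg (shiftV k) (add_neg_cancel v)
  rw [show shiftV k (v + -v) = shiftV k v + shiftV k (-v) from
    Finsupp.mapDomain_add, show shiftV k 0 = 0 from Finsupp.mapDomain_zero] at h
  exact eq_neg_of_add_eq_zero_right h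

lemma dtV_neg (v : ℝ →₀ (Finset (Fin n) → R)) : dtV (-v) = - dtV v := by
  have h := congrArg dtV (add_neg_cancel v)
  rw [dtV_add, show dtV (0 : ℝ →₀ (Finset (Fin n) → R)) = 0 by simp [dtV]] at h
  exact eq_neg_of_add_eq_zero_right h

lemma delta0V_delta0V (D : Fin n → Derivation ℝ R R)
    (hD : ∀ a b (f : R), D a (D b f) = D b (D a f))
    (v : ℝ →₀ (Finset (Fin n) → R)) :
    delta0V D (delta0V D v) = 0 := by
  rw [delta0V_eq, delta0V_eq]
  ext l S
  simp [Finsupp.mapRange_apply, delta0_delta0 D hD]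

theorem odd_Laplacian_squares_to_zero
    (D : Fin n → Derivation ℝ R R)
    (hD : ∀ a b (f : R), D a (D b f) = D b (D a f)) :
    ∀ P : (ℝ →₀ (Finset (Fin n) → R)) × (ℝ →₀ (Finset (Fin n) → R)),
      deltaBV D (deltaBV D P) = 0 := by
  intro P
  refine Prod.ext ?_ ?_
  · show delta0V D (delta0V D P.1 + shiftV 2 (dtV (shiftV (-2) (shiftV 1 P.2))))
      + shiftV 2 (dtV (shiftV (-2) (shiftV 1 (- delta0V D P.2)))) = 0
    rw [delta0V_add, delta0V_delta0V D hD, zero_add,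
      delta0V_shiftV, delta0V_dtV, delta0V_shiftV, delta0V_shiftV,
      shiftV_neg 1, shiftV_neg (-2), dtV_neg, shiftV_neg 2]
    exact add_neg_cancel _
  · show - delta0V D (- delta0V D P.2) = (0 : _ × _).2
    rw [delta0V_neg, neg_neg, delta0V_delta0V D hD]
    rfl

end
end
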